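/- For all integers n and k with 1 ≤ k ≤ n−1 and k odd, the join of a complete graph on (k−1)/2 vertices with an empty graph on n−(k−1)/2 vertices contains no linear forest with k edges. -/

import Mathlib

/-- A linear forest is a graph all of whose connected components are paths or
isolated vertices; equivalently, an acyclic graph of maximum degree at most 2. -/
def IsLinearForest {V : Type*} (F : SimpleGraph V) : Prop :=
  F.IsAcyclic ∧ ∀ v : V, (F.neighborSet v).ncard ≤ 2

theorem stmt_3 (n k : ℕ) (hk : 1 ≤ k) (hkn : k ≤ n - 1) (hodd : Odd k) :
    ¬ ∃ F : SimpleGraph (Fin n),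
        F ≤ SimpleGraph.fromRel (fun u _v : Fin n => (u : ℕ) < (k - 1) / 2) ∧
        IsLinearForest F ∧ F.edgeSet.ncard = k := by
  classical
  rintro ⟨F, hle, ⟨-, hdeg⟩, hcard⟩
  set m := (k - 1) / 2 with hm
  have hmk : 2 * m + 1 = k := by
    obtain ⟨j, rfl⟩ := hodd; omega
  haveI : DecidableRel F.Adj := Classical.decRel _
  set S : Finset (Fin n) := Finset.univ.filter (fun v => (v : ℕ) < m) with hS
  have hScard : S.card ≤ m := by
    have hmem : ∀ v ∈ S, (v : ℕ) ∈ Finset.range m := by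
      intro v hv
      rw [hS, Finset.mem_filter] at hv
      exact Finset.mem_range.2 hv.2
    have := Finset.card_le_card_of_injOn (fun v : Fin n => (v : ℕ)) hmem
      (fun a _ b _ h => Fin.val_injective h)
    rwa [Finset.card_range] at this
  have hsub : F.edgeFinset ⊆ S.biUnion (fun v => F.incidenceFinset v) := by
    intro e he
    rw [SimpleGraph.mem_edgeFinset] at he
    induction e with
    | h a b =>
      have hadj : F.Adj a b := he
      have := hle hadj
      simp only [SimpleGraph.fromRel_adj] at this
      obtain ⟨hne, hor⟩ := this
      rcases hor with h | h
      · exact Finset.mem_biUnion.2 ⟨a, by simp [hS, h],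
          by rw [SimpleGraph.mem_incidenceFinset]; exact F.mk'_mem_incidenceSet_left_iff.2 hadj⟩
      · exact Finset.mem_biUnion.2 ⟨b, by simp [hS, h],
          by rw [SimpleGraph.mem_incidenceFinset]; exact F.mk'_mem_incidenceSet_right_iff.2 hadj⟩
  have hdeg' : ∀ v : Fin n, F.degree v ≤ 2 := by
    intro v
    have := hdeg v
    rwa [Set.ncard_eq_toFinset_card'] at this
  have hbound : F.edgeFinset.card ≤ 2 * m := by
    calc F.edgeFinset.card ≤ ∑ v ∈ S, (F.incidenceFinset v).card :=
          le_trans (Finset.card_le_card hsub) (Finset.card_biUnion_le)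
      _ ≤ ∑ _v ∈ S, 2 := Finset.sum_le_sum (fun v _ => by
          rw [SimpleGraph.card_incidenceFinset_eq_degree]; exact hdeg' v)
      _ = 2 * S.card := by rw [Finset.sum_const]; ring
      _ ≤ 2 * m := by omega
  have : F.edgeFinset.card = k := by
    rw [← hcard, Set.ncard_eq_toFinset_card']
    exact congrArg Finset.card (Set.toFinset_congr rfl)
  omega
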